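/- Let d ≥ 1 be an integer and let p_0, p_1 be real polynomials of degree at most d whose coefficients of x^d are C_0 and C_1 respectively, with C_0 ≥ 0 and C_1 ≥ 0. Define p : ℤ → ℝ by p(m) = p_0(m) for m even and p(m) = p_1(m) for m odd. If there exists N ∈ ℤ such that p(m)² − p(m−1)·p(m+1) > 0 for all m ≥ N, then C_0 = C_1. -/

import Mathlib

open Polynomial Filter

lemma aux_coeff_comp (a : Polynomial ℝ) (d : ℕ) (ha : a.degree ≤ (d:ℕ)) (c : ℝ) :
    (a.comp (X + C c)).coeff d = a.coeff d := by
  rcases eq_or_ne a 0 with rfl | h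
  · simp
  rcases lt_or_eq_of_le (natDegree_le_iff_degree_le.2 ha) with hlt | heq
  · rw [coeff_eq_zero_of_natDegree_lt, coeff_eq_zero_of_natDegree_lt hlt]
    calc (a.comp (X + C c)).natDegree ≤ a.natDegree * (X + C c).natDegree :=
          natDegree_comp_le
      _ = a.natDegree := by rw [natDegree_X_add_C, mul_one]
      _ < d := hlt
  · have hq : (X + C c).natDegree ≠ 0 := by simp [natDegree_X_add_C]
    have hnd : (a.comp (X + C c)).natDegree = d := by
      rw [natDegree_comp, natDegree_X_add_C, mul_one, heq]
    have := leadingCoeff_comp (p := a) hq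
    rw [leadingCoeff, leadingCoeff, hnd, heq] at this
    simp only [leadingCoeff_X_add_C, one_pow, mul_one] at this
    rw [this]

lemma aux_natdeg_comp (a : Polynomial ℝ) (d : ℕ) (ha : a.degree ≤ (d:ℕ)) (c : ℝ) :
    (a.comp (X + C c)).natDegree ≤ d :=
  natDegree_comp_le.trans (by rw [natDegree_X_add_C, mul_one]; exact natDegree_le_iff_degree_le.2 ha)

/-- key: if coeff (2d) of the "difference" polynomial is negative, get a contradiction with
positivity at a sequence of integers tending to infinity. -/
lemma aux_main (d : ℕ) (hd : 1 ≤ d) (a b : Polynomial ℝ)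
    (ha : a.degree ≤ (d:ℕ)) (hb : b.degree ≤ (d:ℕ))
    (hneg : a.coeff d ^ 2 - b.coeff d ^ 2 < 0)
    (hposq : ∀ k : ℤ, ∃ m : ℤ, k ≤ m ∧
      0 < a.eval (m:ℝ) ^ 2 - b.eval ((m:ℝ) - 1) * b.eval ((m:ℝ) + 1)) : False := by
  set q : Polynomial ℝ := a * a - (b.comp (X + C (-1))) * (b.comp (X + C 1)) with hq
  have hcoeff : q.coeff (d + d) = a.coeff d ^ 2 - b.coeff d ^ 2 := by
    rw [hq, coeff_sub, coeff_mul_add_eq_of_natDegree_le (natDegree_le_iff_degree_le.2 ha)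
      (natDegree_le_iff_degree_le.2 ha),
      coeff_mul_add_eq_of_natDegree_le (aux_natdeg_comp b d hb (-1)) (aux_natdeg_comp b d hb 1),
      aux_coeff_comp b d hb, aux_coeff_comp b d hb, sq, sq]
  have hdeg : q.degree ≤ ((d + d : ℕ) : WithBot ℕ) := by
    refine (degree_sub_le _ _).trans (max_le ?_ ?_)
    · exact (degree_mul_le _ _).trans (by push_cast; exact add_le_add ha ha)
    · refine (degree_mul_le _ _).trans ?_
      push_cast
      exact add_le_add (degree_le_natDegree.trans (by exact_mod_cast aux_natdeg_comp b d hb (-1)))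
        (degree_le_natDegree.trans (by exact_mod_cast aux_natdeg_comp b d hb 1))
  have hne : q.coeff (d + d) ≠ 0 := by rw [hcoeff]; exact ne_of_lt hneg
  have hdq : q.degree = ((d + d : ℕ) : WithBot ℕ) :=
    le_antisymm hdeg (le_degree_of_ne_zero hne)
  have hlc : q.leadingCoeff ≤ 0 := by
    rw [leadingCoeff, natDegree_eq_of_degree_eq_some hdq, hcoeff]
    exact le_of_lt hneg
  have hdpos : 0 < q.degree := by
    rw [hdq]; exact_mod_cast Nat.lt_of_lt_of_le Nat.zero_lt_one (le_trans hd (Nat.le_add_right d d))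
  have htb := q.tendsto_atBot_of_leadingCoeff_nonpos hdpos hlc
  obtain ⟨M, hM⟩ := (htb.eventually (eventually_lt_atBot (0:ℝ))).exists_forall_of_atTop
  obtain ⟨m, hm1, h1⟩ := hposq ⌈M⌉
  have hmM : M ≤ (m:ℝ) := le_trans (Int.le_ceil M) (by exact_mod_cast hm1)
  have h2 := hM (m:ℝ) hmM
  have : q.eval (m:ℝ) = a.eval (m:ℝ) ^ 2 - b.eval ((m:ℝ) - 1) * b.eval ((m:ℝ) + 1) := by
    simp only [hq, eval_sub, eval_mul, eval_comp, eval_add, eval_X, eval_C, sq]; ring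
  rw [this] at h2
  linarith

/-- Let `p` be the real quasipolynomial of period 2 given by polynomials `p0` (on even
integers) and `p1` (on odd integers), both of degree at most `d ≥ 1`, with nonnegative
coefficients `C0 = p0.coeff d`, `C1 = p1.coeff d` of `x^d`.  If
`p(m)² − p(m−1)·p(m+1) > 0` for all sufficiently large `m`, then `C0 = C1`. -/
theorem stmt_13 (d : ℕ) (hd : 1 ≤ d) (p0 p1 : Polynomial ℝ)
    (h0 : p0.degree ≤ (d : ℕ)) (h1 : p1.degree ≤ (d : ℕ))
    (hC0 : 0 ≤ p0.coeff d) (hC1 : 0 ≤ p1.coeff d)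
    (p : ℤ → ℝ)
    (hp : ∀ m : ℤ, p m = if Even m then p0.eval (m : ℝ) else p1.eval (m : ℝ))
    (N : ℤ) (hpos : ∀ m : ℤ, N ≤ m → 0 < p m ^ 2 - p (m - 1) * p (m + 1)) :
    p0.coeff d = p1.coeff d := by
  have heven : ∀ k : ℤ, ∃ m : ℤ, k ≤ m ∧
      0 < p0.eval (m:ℝ) ^ 2 - p1.eval ((m:ℝ) - 1) * p1.eval ((m:ℝ) + 1) := by
    intro k
    set t : ℤ := max (max k N) 0 with ht
    have ht0 : 0 ≤ t := le_max_right _ _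
    have hk : k ≤ t := le_trans (le_max_left k N) (le_max_left _ _)
    have hN : N ≤ t := le_trans (le_max_right k N) (le_max_left _ _)
    refine ⟨2 * t, by omega, ?_⟩
    have h := hpos (2 * t) (by omega)
    rw [hp, hp, hp] at h
    have he : Even (2 * t) := even_two_mul t
    have ho1 : ¬ Even (2 * t - 1) := by simp [Int.even_sub]
    have ho2 : ¬ Even (2 * t + 1) := by simp [Int.even_add]
    rw [if_pos he, if_neg ho1, if_neg ho2] at h
    push_cast at h ⊢
    convert h using 3 <;> ring
  have hodd : ∀ k : ℤ, ∃ m : ℤ, k ≤ m ∧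
      0 < p1.eval (m:ℝ) ^ 2 - p0.eval ((m:ℝ) - 1) * p0.eval ((m:ℝ) + 1) := by
    intro k
    set t : ℤ := max (max k N) 0 with ht
    have ht0 : 0 ≤ t := le_max_right _ _
    have hk : k ≤ t := le_trans (le_max_left k N) (le_max_left _ _)
    have hN : N ≤ t := le_trans (le_max_right k N) (le_max_left _ _)
    refine ⟨2 * t + 1, by omega, ?_⟩
    have h := hpos (2 * t + 1) (by omega)
    rw [hp, hp, hp] at h
    have he : ¬ Even (2 * t + 1) := by simp [Int.even_add]
    have ho1 : Even (2 * t + 1 - 1) := by simp [Int.even_sub]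
    have ho2 : Even (2 * t + 1 + 1) := by refine ⟨t + 1, by ring⟩
    rw [if_neg he, if_pos ho1, if_pos ho2] at h
    push_cast at h ⊢
    convert h using 3 <;> ring
  rcases lt_trichotomy (p0.coeff d) (p1.coeff d) with hlt | heq | hlt
  · exact absurd (aux_main d hd p0 p1 h0 h1
      (by nlinarith [pow_lt_pow_left₀ hlt hC0 two_ne_zero]) heven) (by simp)
  · exact heq
  · exact absurd (aux_main d hd p1 p0 h1 h0
      (by nlinarith [pow_lt_pow_left₀ hlt hC1 two_ne_zero]) hodd) (by simp)
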